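/- The space of isometry classes of compact metric spaces endowed with the Gromov–Hausdorff distance is a geodesic metric space: for any two classes [X], [Y], there exists a curve γ : [0,1] → M/∼ with γ(0) = [X], γ(1) = [Y], and d_GH(γ(s),γ(t)) = |t−s|·d_GH([X],[Y]) for all s,t. -/

import Mathlib

open GromovHausdorff Metric Set

namespace GHGeodesicAux

universe u v

variable (X : Type u) [MetricSpace X] [CompactSpace X] [Nonempty X]
variable (Y : Type v) [MetricSpace Y] [CompactSpace Y] [Nonempty Y]

/-- The "optimal correspondence" between `X` and `Y`: pairs whose images in the optimal
Gromov-Hausdorff coupling are at distance at most `ghDist X Y`. The real parameter `t`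
is a phantom parameter, used to carry different (interpolated) metrics. -/
@[ext]
structure Pt (_t : ℝ) : Type (max u v) where
  x : X
  y : Y
  close : dist (optimalGHInjl X Y x) (optimalGHInjr X Y y) ≤ ghDist X Y

lemma edist_ranges_ne_top :
    EMetric.hausdorffEdist (range (optimalGHInjl X Y)) (range (optimalGHInjr X Y)) ≠ ⊤ :=
  hausdorffEdist_ne_top_of_nonempty_of_bounded (range_nonempty _) (range_nonempty _)
    (isCompact_range (isometry_optimalGHInjl X Y).continuous).isBounded
    (isCompact_range (isometry_optimalGHInjr X Y).continuous).isBounded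

lemma exists_right (x : X) :
    ∃ y : Y, dist (optimalGHInjl X Y x) (optimalGHInjr X Y y) ≤ ghDist X Y := by
  obtain ⟨z, hz, hd⟩ :=
    (isCompact_range (isometry_optimalGHInjr X Y).continuous).exists_infDist_eq_dist
      (range_nonempty _) (optimalGHInjl X Y x)
  obtain ⟨y, rfl⟩ := hz
  refine ⟨y, ?_⟩
  rw [← hd]
  rw [← hausdorffDist_optimal (X := X) (Y := Y)]
  exact infDist_le_hausdorffDist_of_mem (mem_range_self x) (edist_ranges_ne_top X Y)

lemma exists_left (y : Y) :
    ∃ x : X, dist (optimalGHInjl X Y x) (optimalGHInjr X Y y) ≤ ghDist X Y := by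
  obtain ⟨z, hz, hd⟩ :=
    (isCompact_range (isometry_optimalGHInjl X Y).continuous).exists_infDist_eq_dist
      (range_nonempty _) (optimalGHInjr X Y y)
  obtain ⟨x, rfl⟩ := hz
  refine ⟨x, ?_⟩
  have fin : EMetric.hausdorffEdist (range (optimalGHInjr X Y)) (range (optimalGHInjl X Y)) ≠ ⊤ := by
    rw [EMetric.hausdorffEdist, EMetric.hausdorffEdist_comm]; exact edist_ranges_ne_top X Y
  rw [dist_comm, ← hd, ← hausdorffDist_optimal (X := X) (Y := Y), hausdorffDist_comm]
  exact infDist_le_hausdorffDist_of_mem (mem_range_self y) fin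

instance (t : ℝ) : Nonempty (Pt X Y t) := by
  obtain ⟨y, hy⟩ := exists_right X Y (Classical.arbitrary X)
  exact ⟨⟨_, y, hy⟩⟩

lemma dis_bound {t s : ℝ} (a : Pt X Y t) (b : Pt X Y s) :
    |dist a.x b.x - dist a.y b.y| ≤ 2 * ghDist X Y := by
  have h1 : dist a.x b.x = dist (optimalGHInjl X Y a.x) (optimalGHInjl X Y b.x) :=
    ((isometry_optimalGHInjl X Y).dist_eq _ _).symm
  have h2 : dist a.y b.y = dist (optimalGHInjr X Y a.y) (optimalGHInjr X Y b.y) :=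
    ((isometry_optimalGHInjr X Y).dist_eq _ _).symm
  have A := dist_triangle4 (optimalGHInjl X Y a.x) (optimalGHInjr X Y a.y)
    (optimalGHInjr X Y b.y) (optimalGHInjl X Y b.x)
  have B := dist_triangle4 (optimalGHInjr X Y a.y) (optimalGHInjl X Y a.x)
    (optimalGHInjl X Y b.x) (optimalGHInjr X Y b.y)
  have ha := a.close
  have hb := b.close
  have hc1 : dist (optimalGHInjr X Y b.y) (optimalGHInjl X Y b.x)
      = dist (optimalGHInjl X Y b.x) (optimalGHInjr X Y b.y) := dist_comm _ _
  have hc2 : dist (optimalGHInjr X Y a.y) (optimalGHInjl X Y a.x)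
      = dist (optimalGHInjl X Y a.x) (optimalGHInjr X Y a.y) := dist_comm _ _
  rw [abs_le]
  constructor <;> [skip; skip] <;> nlinarith [dist_nonneg (x := optimalGHInjl X Y a.x) (y := optimalGHInjl X Y b.x)]

/-- The interpolated metric `(1-t) d_X + t d_Y` on the correspondence. -/
noncomputable def ptMS (t : ℝ) (h0 : 0 < t) (h1 : t < 1) : MetricSpace (Pt X Y t) where
  dist a b := (1 - t) * dist a.x b.x + t * dist a.y b.y
  dist_self a := by simp
  dist_comm a b := by simp [dist_comm]
  dist_triangle a b c := by
    have hx := dist_triangle a.x b.x c.x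
    have hy := dist_triangle a.y b.y c.y
    show (1 - t) * dist a.x c.x + t * dist a.y c.y ≤ ((1 - t) * dist a.x b.x + t * dist a.y b.y) + ((1 - t) * dist b.x c.x + t * dist b.y c.y)
    nlinarith
  eq_of_dist_eq_zero := by
    intro a b hab
    change (1 - t) * dist a.x b.x + t * dist a.y b.y = 0 at hab
    have n1 : (0:ℝ) ≤ dist a.x b.x := dist_nonneg
    have n2 : (0:ℝ) ≤ dist a.y b.y := dist_nonneg
    have hx : dist a.x b.x = 0 := by nlinarith
    have hy : dist a.y b.y = 0 := by nlinarith
    exact Pt.ext (by rwa [← dist_eq_zero]) (by rwa [← dist_eq_zero])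

lemma ptMS_dist (t : ℝ) (h0 : 0 < t) (h1 : t < 1) (a b : Pt X Y t) :
    @dist _ (ptMS X Y t h0 h1).toDist a b
      = (1 - t) * dist a.x b.x + t * dist a.y b.y := rfl

lemma ptMS_compact (t : ℝ) (h0 : 0 < t) (h1 : t < 1) :
    letI := ptMS X Y t h0 h1
    CompactSpace (Pt X Y t) := by
  letI := ptMS X Y t h0 h1
  set S : Set (X × Y) :=
    {xy | dist (optimalGHInjl X Y xy.1) (optimalGHInjr X Y xy.2) ≤ ghDist X Y} with hSdef
  have hSc : IsClosed S := isClosed_le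
    (((isometry_optimalGHInjl X Y).continuous.comp continuous_fst).dist
      ((isometry_optimalGHInjr X Y).continuous.comp continuous_snd)) continuous_const
  have hS : IsCompact S := hSc.isCompact
  haveI : CompactSpace S := isCompact_iff_compactSpace.mp hS
  let f : S → Pt X Y t := fun a => ⟨a.1.1, a.1.2, a.2⟩
  have hf : Function.Surjective f := fun b => ⟨⟨(b.x, b.y), b.close⟩, rfl⟩
  have hfc : Continuous f := by
    apply (LipschitzWith.of_dist_le_mul (K := 1) (f := f) ?_).continuous
    intro a b
    have hd : dist (f a) (f b) = (1 - t) * dist a.1.1 b.1.1 + t * dist a.1.2 b.1.2 := rfl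
    have hd2 : dist a b = max (dist a.1.1 b.1.1) (dist a.1.2 b.1.2) := by
      rw [Subtype.dist_eq, Prod.dist_eq]
    have l1 : dist a.1.1 b.1.1 ≤ max (dist a.1.1 b.1.1) (dist a.1.2 b.1.2) := le_max_left _ _
    have l2 : dist a.1.2 b.1.2 ≤ max (dist a.1.1 b.1.1) (dist a.1.2 b.1.2) := le_max_right _ _
    rw [hd, hd2]
    push_cast
    nlinarith
  exact ⟨hf.range_eq ▸ isCompact_range hfc⟩

/-- The interpolating space as a point of the Gromov-Hausdorff space. -/
noncomputable def interpGH (t : ℝ) (h0 : 0 < t) (h1 : t < 1) : GHSpace :=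
  letI := ptMS X Y t h0 h1
  haveI := ptMS_compact X Y t h0 h1
  toGHSpace (Pt X Y t)

lemma interpGH_dist_left (t : ℝ) (h0 : 0 < t) (h1 : t < 1) :
    dist (interpGH X Y t h0 h1) (toGHSpace X) ≤ t * ghDist X Y := by
  letI := ptMS X Y t h0 h1
  haveI := ptMS_compact X Y t h0 h1
  have key : ghDist (Pt X Y t) X ≤ 0 + 2 * (t * ghDist X Y) / 2 + 0 := by
    apply ghDist_le_of_approx_subsets (s := (univ : Set (Pt X Y t)))
      (fun a => (a : Pt X Y t).x)
    · intro a; exact ⟨a, mem_univ _, by simp⟩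
    · intro x
      obtain ⟨y, hy⟩ := exists_right X Y x
      exact ⟨⟨⟨x, y, hy⟩, mem_univ _⟩, by simp⟩
    · intro a b
      rw [Subtype.dist_eq, ptMS_dist]
      have hb := dis_bound X Y (a : Pt X Y t) (b : Pt X Y t)
      have he : (1 - t) * dist (a : Pt X Y t).x (b : Pt X Y t).x
          + t * dist (a : Pt X Y t).y (b : Pt X Y t).y
          - dist (a : Pt X Y t).x (b : Pt X Y t).x
          = t * (dist (a : Pt X Y t).y (b : Pt X Y t).y
              - dist (a : Pt X Y t).x (b : Pt X Y t).x) := by ring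
      rw [he, abs_mul, abs_of_pos h0, abs_sub_comm]
      nlinarith
  have hEq : dist (interpGH X Y t h0 h1) (toGHSpace X) = ghDist (Pt X Y t) X := rfl
  rw [hEq]; linarith

lemma interpGH_dist_right (t : ℝ) (h0 : 0 < t) (h1 : t < 1) :
    dist (interpGH X Y t h0 h1) (toGHSpace Y) ≤ (1 - t) * ghDist X Y := by
  letI := ptMS X Y t h0 h1
  haveI := ptMS_compact X Y t h0 h1
  have key : ghDist (Pt X Y t) Y ≤ 0 + 2 * ((1 - t) * ghDist X Y) / 2 + 0 := by
    apply ghDist_le_of_approx_subsets (s := (univ : Set (Pt X Y t)))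
      (fun a => (a : Pt X Y t).y)
    · intro a; exact ⟨a, mem_univ _, by simp⟩
    · intro y
      obtain ⟨x, hx⟩ := exists_left X Y y
      exact ⟨⟨⟨x, y, hx⟩, mem_univ _⟩, by simp⟩
    · intro a b
      rw [Subtype.dist_eq, ptMS_dist]
      have hb := dis_bound X Y (a : Pt X Y t) (b : Pt X Y t)
      have he : (1 - t) * dist (a : Pt X Y t).x (b : Pt X Y t).x
          + t * dist (a : Pt X Y t).y (b : Pt X Y t).y
          - dist (a : Pt X Y t).y (b : Pt X Y t).y
          = (1 - t) * (dist (a : Pt X Y t).x (b : Pt X Y t).x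
              - dist (a : Pt X Y t).y (b : Pt X Y t).y) := by ring
      rw [he, abs_mul, abs_of_pos (by linarith)]
      nlinarith
  have hEq : dist (interpGH X Y t h0 h1) (toGHSpace Y) = ghDist (Pt X Y t) Y := rfl
  rw [hEq]; linarith

lemma interpGH_dist_mid (s t : ℝ) (hs0 : 0 < s) (hs1 : s < 1) (ht0 : 0 < t) (ht1 : t < 1) :
    dist (interpGH X Y s hs0 hs1) (interpGH X Y t ht0 ht1) ≤ |t - s| * ghDist X Y := by
  letI := ptMS X Y s hs0 hs1
  letI := ptMS X Y t ht0 ht1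
  haveI := ptMS_compact X Y s hs0 hs1
  haveI := ptMS_compact X Y t ht0 ht1
  have key : ghDist (Pt X Y s) (Pt X Y t) ≤ 0 + 2 * (|t - s| * ghDist X Y) / 2 + 0 := by
    apply ghDist_le_of_approx_subsets (s := (univ : Set (Pt X Y s)))
      (fun a => (⟨(a : Pt X Y s).x, (a : Pt X Y s).y, (a : Pt X Y s).close⟩ : Pt X Y t))
    · intro a; exact ⟨a, mem_univ _, by simp⟩
    · intro b
      refine ⟨⟨⟨b.x, b.y, b.close⟩, mem_univ _⟩, ?_⟩
      have : dist b (⟨b.x, b.y, b.close⟩ : Pt X Y t) = 0 := by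
        rw [ptMS_dist]; simp
      rw [this]
    · intro a b
      rw [Subtype.dist_eq, ptMS_dist, ptMS_dist]
      have hb := dis_bound X Y (a : Pt X Y s) (b : Pt X Y s)
      have he : ((1 - s) * dist (a : Pt X Y s).x (b : Pt X Y s).x
          + s * dist (a : Pt X Y s).y (b : Pt X Y s).y)
          - ((1 - t) * dist (a : Pt X Y s).x (b : Pt X Y s).x
          + t * dist (a : Pt X Y s).y (b : Pt X Y s).y)
          = (t - s) * (dist (a : Pt X Y s).x (b : Pt X Y s).x
              - dist (a : Pt X Y s).y (b : Pt X Y s).y) := by ring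
      rw [he, abs_mul]
      have : |dist (a : Pt X Y s).x (b : Pt X Y s).x
          - dist (a : Pt X Y s).y (b : Pt X Y s).y| ≤ 2 * ghDist X Y := hb
      nlinarith [abs_nonneg (t - s)]
  have hEq : dist (interpGH X Y s hs0 hs1) (interpGH X Y t ht0 ht1)
      = ghDist (Pt X Y s) (Pt X Y t) := rfl
  rw [hEq]; linarith

end GHGeodesicAux

open GHGeodesicAux in
theorem ghSpace_geodesicSpace (p q : GHSpace) :
    ∃ γ : ℝ → GHSpace, γ 0 = p ∧ γ 1 = q ∧
      ∀ s ∈ Set.Icc (0:ℝ) 1, ∀ t ∈ Set.Icc (0:ℝ) 1,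
        dist (γ s) (γ t) = |t - s| * dist p q := by
  classical
  set X := p.Rep
  set Y := q.Rep
  have hg : ghDist X Y = dist p q := (dist_ghDist p q).symm
  set g := dist p q with hgdef
  have hg0 : 0 ≤ g := dist_nonneg
  refine ⟨fun t => if h0 : t ≤ 0 then p else if h1 : 1 ≤ t then q else
    interpGH X Y t (lt_of_not_ge h0) (lt_of_not_ge h1), ?_, ?_, ?_⟩
  · simp
  · norm_num
  set γ : ℝ → GHSpace := fun t => if h0 : t ≤ 0 then p else if h1 : 1 ≤ t then q else
    interpGH X Y t (lt_of_not_ge h0) (lt_of_not_ge h1) with hγ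
  have hγ0 : γ 0 = p := by simp [hγ]
  have hγ1 : γ 1 = q := by norm_num [hγ]
  -- upper bound: distance to p
  have hpγ : ∀ t ∈ Set.Icc (0:ℝ) 1, dist p (γ t) ≤ t * g := by
    rintro t ⟨ht0, ht1⟩
    by_cases h0 : t ≤ 0
    · have : t = 0 := le_antisymm h0 ht0
      subst this
      simp [hγ0]
    · by_cases h1 : 1 ≤ t
      · have : t = 1 := le_antisymm ht1 h1
        subst this
        simpa [hγ1, hgdef] using le_refl (dist p q)
      · have : γ t = interpGH X Y t (lt_of_not_ge h0) (lt_of_not_ge h1) := by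
          simp [hγ, h0, h1]
        rw [this]
        have h' := interpGH_dist_left X Y t (lt_of_not_ge h0) (lt_of_not_ge h1)
        rw [hg, p.toGHSpace_rep] at h'
        rw [dist_comm]
        exact h'
  have hγq : ∀ t ∈ Set.Icc (0:ℝ) 1, dist (γ t) q ≤ (1 - t) * g := by
    rintro t ⟨ht0, ht1⟩
    by_cases h0 : t ≤ 0
    · have : t = 0 := le_antisymm h0 ht0
      subst this
      rw [hγ0]
      simpa [hgdef] using le_refl (dist p q)
    · by_cases h1 : 1 ≤ t
      · have : t = 1 := le_antisymm ht1 h1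
        subst this
        simp [hγ1]
      · have : γ t = interpGH X Y t (lt_of_not_ge h0) (lt_of_not_ge h1) := by
          simp [hγ, h0, h1]
        rw [this]
        have h' := interpGH_dist_right X Y t (lt_of_not_ge h0) (lt_of_not_ge h1)
        rw [hg, q.toGHSpace_rep] at h'
        exact h'
  -- upper bound for intermediate distances, s ≤ t
  have hmid : ∀ s t : ℝ, 0 ≤ s → s ≤ t → t ≤ 1 → dist (γ s) (γ t) ≤ (t - s) * g := by
    intro s t hs0 hst ht1
    by_cases h0 : s ≤ 0
    · have hs : s = 0 := le_antisymm h0 hs0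
      subst hs
      have := hpγ t ⟨hst, ht1⟩
      rw [hγ0]
      linarith
    · by_cases h1 : 1 ≤ t
      · have ht : t = 1 := le_antisymm ht1 h1
        subst ht
        have := hγq s ⟨hs0, hst⟩
        rw [hγ1]
        linarith
      · have hs1 : s < 1 := lt_of_le_of_lt hst (lt_of_not_ge h1)
        have ht0 : 0 < t := lt_of_lt_of_le (lt_of_not_ge h0) hst
        have hγs : γ s = interpGH X Y s (lt_of_not_ge h0) hs1 := by
          simp [hγ, h0, not_le.mpr hs1]
        have hγt : γ t = interpGH X Y t ht0 (lt_of_not_ge h1) := by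
          simp [hγ, not_le.mpr ht0, h1]
        rw [hγs, hγt]
        have := interpGH_dist_mid X Y s t (lt_of_not_ge h0) hs1 ht0 (lt_of_not_ge h1)
        rw [hg, abs_of_nonneg (by linarith : (0:ℝ) ≤ t - s)] at this
        exact this
  -- main claim for s ≤ t
  have main : ∀ s ∈ Set.Icc (0:ℝ) 1, ∀ t ∈ Set.Icc (0:ℝ) 1, s ≤ t →
      dist (γ s) (γ t) = (t - s) * g := by
    rintro s ⟨hs0, hs1⟩ t ⟨ht0, ht1⟩ hst
    have hup := hmid s t hs0 hst ht1
    have hlow : (t - s) * g ≤ dist (γ s) (γ t) := by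
      have htri := dist_triangle4 p (γ s) (γ t) q
      have h1 := hpγ s ⟨hs0, hs1⟩
      have h2 := hγq t ⟨ht0, ht1⟩
      nlinarith
    linarith
  rintro s hs t ht
  rcases le_total s t with hst | hts
  · rw [main s hs t ht hst, abs_of_nonneg (by linarith : (0:ℝ) ≤ t - s)]
  · rw [dist_comm, main t ht s hs hts, abs_of_nonpos (by linarith : t - s ≤ 0)]
    ring
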